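/- Let $(\Gamma,p)$ be a unidimensional conic framework whose graph $G_-$ of decreasing arcs is disconnected. Then there exists a non-trivial admissible instantaneous velocity vector: namely, taking a set $U$ of vertices disconnected from its complement in $G_-$ and defining $q_u = (1,-1)$ for $u \in U$ and $q_u = (0,0)$ for $u \notin U$ yields a vector satisfying $(x_u-x_w)(v_u-v_w) + |x_u-x_w|(\alpha_w-\alpha_u) = 0$ for every arc $uw$, which is not of the form (all $v_u$ equal and all $\alpha_u$ equal). -/
import Mathlib


/-- Undirected graph of decreasing arcs. -/
def Gminus {V : Type*} [DecidableEq V] (E : Finset (V × V)) (x : V → ℝ) : SimpleGraph V :=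
  SimpleGraph.fromRel (fun u w => (u, w) ∈ E ∧ x u > x w)

/-- An instantaneous velocity `(v, α)` is admissible. -/
def Admissible {V : Type*} (E : Finset (V × V)) (x v α : V → ℝ) : Prop :=
  ∀ e ∈ E, (x e.1 - x e.2) * (v e.1 - v e.2) + |x e.1 - x e.2| * (α e.2 - α e.1) = 0

/-- If `G₋` is disconnected, witnessed by a nonempty proper subset `U` with no `G₋`
edge to its complement, then the velocity equal to `(1, -1)` on `U` and `(0, 0)`
outside is admissible and non-trivial. -/
theorem stmt_5 {V : Type*} [Fintype V] [DecidableEq V] (E : Finset (V × V)) (x β : V → ℝ)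
    (U : Finset V) (hne : U.Nonempty) (hproper : U ≠ Finset.univ)
    (hcut : ∀ u ∈ U, ∀ w ∉ U, ¬ (Gminus E x).Adj u w) :
    Admissible E x (fun u => if u ∈ U then (1 : ℝ) else 0)
        (fun u => if u ∈ U then (-1 : ℝ) else 0) ∧
    ¬ ((∀ u w : V, (if u ∈ U then (1 : ℝ) else 0) = (if w ∈ U then (1 : ℝ) else 0)) ∧
       (∀ u w : V, (if u ∈ U then (-1 : ℝ) else 0) = (if w ∈ U then (-1 : ℝ) else 0))) := by
  constructor
  · intro e he
    obtain ⟨u, w⟩ := e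
    simp only
    by_cases hu : u ∈ U <;> by_cases hw : w ∈ U <;> simp [hu, hw]
    · -- u ∈ U, w ∉ U : cut forces x u ≤ x w
      have hne' : u ≠ w := fun h => hw (h ▸ hu)
      have hadj := hcut u hu w hw
      have hxle : x u ≤ x w := by
        by_contra hlt
        exact hadj ⟨hne', Or.inl ⟨he, lt_of_not_ge hlt⟩⟩
      have : |x u - x w| = x w - x u := by
        rw [abs_of_nonpos (by linarith)]; ring
      rw [this]; ring
    · -- u ∉ U, w ∈ U : cut forces x u ≤ x w
      have hne' : w ≠ u := fun h => hu (h ▸ hw)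
      have hadj := hcut w hw u hu
      have hxle : x u ≤ x w := by
        by_contra hlt
        exact hadj ⟨hne', Or.inr ⟨he, lt_of_not_ge hlt⟩⟩
      have : |x u - x w| = x w - x u := by
        rw [abs_of_nonpos (by linarith)]; ring
      rw [this]; ring
  · rintro ⟨hv, -⟩
    obtain ⟨u, hu⟩ := hne
    obtain ⟨w, hw⟩ : ∃ w, w ∉ U := by
      by_contra h
      push_neg at h
      exact hproper (Finset.eq_univ_iff_forall.2 h)
    have := hv u w
    simp [hu, hw] at this
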